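/- Assume the polynomial z·v(z) − u(z) is not the zero polynomial, and let R₁ = {z ∈ ℂ : z·v(z) − u(z) = 0} (a finite set). Then the complex spectral norm of f satisfies ‖f‖_{σ,ℂ} = max{ |s_d| , max{ |φ(z)| / (1+|z|²)^{d/2} : z ∈ R₁ } }. -/

import Mathlib

noncomputable section

/-- `p(z) = Σ_{j=0}^{d-1} C(d-1,j) s_{j+1} z^j`. -/
def pP (d : ℕ) (s : ℕ → ℂ) : Polynomial ℂ :=
  ∑ j ∈ Finset.range d, Polynomial.C (((d - 1).choose j : ℂ) * s (j + 1)) * Polynomial.X ^ j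

/-- `q(z) = Σ_{j=0}^{d-1} C(d-1,j) s_j z^j`. -/
def qP (d : ℕ) (s : ℕ → ℂ) : Polynomial ℂ :=
  ∑ j ∈ Finset.range d, Polynomial.C (((d - 1).choose j : ℂ) * s j) * Polynomial.X ^ j

/-- `u(z) = Σ_{j=0}^{d-1} C(d-1,j) conj(s_{j+1}) p(z)^j q(z)^{d-1-j}`. -/
def uP (d : ℕ) (s : ℕ → ℂ) : Polynomial ℂ :=
  ∑ j ∈ Finset.range d, Polynomial.C (((d - 1).choose j : ℂ) * (starRingEnd ℂ) (s (j + 1))) *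
    (pP d s) ^ j * (qP d s) ^ (d - 1 - j)

/-- `v(z) = Σ_{j=0}^{d-1} C(d-1,j) conj(s_j) p(z)^j q(z)^{d-1-j}`. -/
def vP (d : ℕ) (s : ℕ → ℂ) : Polynomial ℂ :=
  ∑ j ∈ Finset.range d, Polynomial.C (((d - 1).choose j : ℂ) * (starRingEnd ℂ) (s j)) *
    (pP d s) ^ j * (qP d s) ^ (d - 1 - j)

/-- `φ(z) = Σ_{j=0}^{d} C(d,j) s_j z^j`. -/
def phiP (d : ℕ) (s : ℕ → ℂ) : Polynomial ℂ :=
  ∑ j ∈ Finset.range (d + 1), Polynomial.C ((d.choose j : ℂ) * s j) * Polynomial.X ^ j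

/-- `f(x₁,x₂) = Σ_{j=0}^{d} C(d,j) s_j x₁^{d-j} x₂^j`. -/
def fval (d : ℕ) (s : ℕ → ℂ) (x₁ x₂ : ℂ) : ℂ :=
  ∑ j ∈ Finset.range (d + 1), (d.choose j : ℂ) * s j * x₁ ^ (d - j) * x₂ ^ j

/-- The complex spectral norm of the binary form `f`. -/
def specNorm2 (d : ℕ) (s : ℕ → ℂ) : ℝ :=
  sSup {r : ℝ | ∃ x₁ x₂ : ℂ, ‖x₁‖ ^ 2 + ‖x₂‖ ^ 2 = 1 ∧
    r = ‖fval d s x₁ x₂‖}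

open Polynomial Finset Complex

section Aux

variable {d : ℕ} {s : ℕ → ℂ}

lemma pP_eval (d : ℕ) (s : ℕ → ℂ) (z : ℂ) :
    (pP d s).eval z = ∑ j ∈ range d, ((d - 1).choose j : ℂ) * s (j + 1) * z ^ j := by
  simp [pP, eval_finset_sum]

lemma qP_eval (d : ℕ) (s : ℕ → ℂ) (z : ℂ) :
    (qP d s).eval z = ∑ j ∈ range d, ((d - 1).choose j : ℂ) * s j * z ^ j := by
  simp [qP, eval_finset_sum]

lemma phiP_eval (d : ℕ) (s : ℕ → ℂ) (z : ℂ) :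
    (phiP d s).eval z = ∑ j ∈ range (d + 1), (d.choose j : ℂ) * s j * z ^ j := by
  simp [phiP, eval_finset_sum]

lemma uP_eval (d : ℕ) (s : ℕ → ℂ) (z : ℂ) :
    (uP d s).eval z = ∑ j ∈ range d, ((d - 1).choose j : ℂ) * (starRingEnd ℂ) (s (j + 1)) *
      ((pP d s).eval z) ^ j * ((qP d s).eval z) ^ (d - 1 - j) := by
  simp [uP, eval_finset_sum]

lemma vP_eval (d : ℕ) (s : ℕ → ℂ) (z : ℂ) :
    (vP d s).eval z = ∑ j ∈ range d, ((d - 1).choose j : ℂ) * (starRingEnd ℂ) (s j) *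
      ((pP d s).eval z) ^ j * ((qP d s).eval z) ^ (d - 1 - j) := by
  simp [vP, eval_finset_sum]

/-- φ(z) = z p(z) + q(z) for d ≥ 1 -/
lemma phi_decomp (hd : 1 ≤ d) (s : ℕ → ℂ) (z : ℂ) :
    (phiP d s).eval z = z * (pP d s).eval z + (qP d s).eval z := by
  rw [phiP_eval, pP_eval, qP_eval]
  rw [Finset.sum_range_succ' (fun j => (d.choose j : ℂ) * s j * z ^ j) d]
  have key : ∀ j ∈ range d, (d.choose (j+1) : ℂ) * s (j+1) * z ^ (j+1)
      = ((d-1).choose j : ℂ) * s (j+1) * z^(j+1) + ((d-1).choose (j+1) : ℂ) * s (j+1) * z^(j+1) := by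
    intro j _
    have : d.choose (j+1) = (d-1).choose j + (d-1).choose (j+1) := by
      conv_lhs => rw [← Nat.succ_pred_eq_of_pos (by omega : 0 < d)]
      rw [Nat.choose_succ_succ]
      rfl
    rw [this]
    push_cast
    ring
  rw [Finset.sum_congr rfl key, Finset.sum_add_distrib]
  have h2 : ∑ j ∈ range d, ((d-1).choose (j+1) : ℂ) * s (j+1) * z^(j+1)
      = ∑ j ∈ range (d+1), ((d-1).choose j : ℂ) * s j * z ^ j
        - ((d-1).choose 0 : ℂ) * s 0 * z ^ 0 := by
    rw [Finset.sum_range_succ' (fun j => ((d-1).choose j : ℂ) * s j * z ^ j) d]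
    ring
  rw [h2, Finset.sum_range_succ (fun j => ((d-1).choose j : ℂ) * s j * z ^ j) d]
  have : (d-1).choose d = 0 := Nat.choose_eq_zero_of_lt (by omega)
  rw [this]
  rw [Finset.mul_sum]
  simp only [Nat.choose_zero_right, Nat.cast_zero, Nat.cast_one, pow_zero]
  rw [Finset.sum_congr rfl (fun j _ => by ring :
    ∀ j ∈ range d, ((d-1).choose j : ℂ) * s (j+1) * z^(j+1) = z * (((d-1).choose j : ℂ) * s (j+1) * z ^ j))]
  push_cast
  ring

/-- derivative of φ evaluates to d * p(z) -/
lemma phi_deriv (hd : 1 ≤ d) (s : ℕ → ℂ) (z : ℂ) :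
    (Polynomial.derivative (phiP d s)).eval z = (d : ℂ) * (pP d s).eval z := by
  have : Polynomial.derivative (phiP d s)
      = ∑ j ∈ range (d+1), Polynomial.C ((d.choose j : ℂ) * s j) * ((j : ℂ[X]) * Polynomial.X ^ (j-1)) := by
    simp [phiP, derivative_sum, derivative_C_mul, derivative_X_pow]
  rw [this]
  rw [eval_finset_sum, pP_eval]
  simp only [eval_mul, eval_C, eval_pow, eval_X, eval_natCast]
  rw [Finset.sum_range_succ' (fun j => (d.choose j : ℂ) * s j * ((j:ℂ) * z ^ (j-1))) d]
  simp only [Nat.cast_zero, zero_mul, mul_zero, add_zero, Nat.add_sub_cancel]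
  rw [Finset.mul_sum]
  refine Finset.sum_congr rfl fun j hj => ?_
  have key : (d : ℂ) * ((d-1).choose j : ℂ) = (d.choose (j+1) : ℂ) * ((j : ℂ) + 1) := by
    have h0 := Nat.add_one_mul_choose_eq (d-1) j
    have h1 : d - 1 + 1 = d := by omega
    rw [h1] at h0
    have h2 : (d * (d-1).choose j : ℂ) = ((d.choose (j+1)) * (j+1) : ℕ) := by
      exact_mod_cast congrArg (Nat.cast : ℕ → ℂ) h0
    push_cast at h2
    linear_combination h2
  push_cast
  linear_combination (-(s (j+1) * z ^ j)) * key

lemma conj_pP_eval (d : ℕ) (s : ℕ → ℂ) (z : ℂ) :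
    (starRingEnd ℂ) ((pP d s).eval z)
      = ∑ j ∈ range d, ((d - 1).choose j : ℂ) * (starRingEnd ℂ) (s (j + 1)) * ((starRingEnd ℂ) z) ^ j := by
  rw [pP_eval, map_sum]
  refine Finset.sum_congr rfl fun j _ => ?_
  simp [map_mul, map_pow]

lemma conj_qP_eval (d : ℕ) (s : ℕ → ℂ) (z : ℂ) :
    (starRingEnd ℂ) ((qP d s).eval z)
      = ∑ j ∈ range d, ((d - 1).choose j : ℂ) * (starRingEnd ℂ) (s j) * ((starRingEnd ℂ) z) ^ j := by
  rw [qP_eval, map_sum]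
  refine Finset.sum_congr rfl fun j _ => ?_
  simp [map_mul, map_pow]

lemma root_of_crit (hd : 1 ≤ d) (s : ℕ → ℂ) (z : ℂ)
    (hcrit : (pP d s).eval z = (starRingEnd ℂ) z * (qP d s).eval z) :
    (Polynomial.X * vP d s - uP d s).eval z = 0 := by
  set Q := (qP d s).eval z with hQ
  have hu : (uP d s).eval z = Q ^ (d-1) * (starRingEnd ℂ) ((pP d s).eval z) := by
    rw [uP_eval, conj_pP_eval, Finset.mul_sum]
    refine Finset.sum_congr rfl fun j hj => ?_
    simp only [Finset.mem_range] at hj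
    have hq : Q ^ j * Q ^ (d - 1 - j) = Q ^ (d-1) := by
      rw [← pow_add]; congr 1; omega
    rw [hcrit, mul_pow]
    linear_combination (((d - 1).choose j : ℂ) * (starRingEnd ℂ) (s (j+1)) * ((starRingEnd ℂ) z) ^ j) * hq
  have hv : (vP d s).eval z = Q ^ (d-1) * (starRingEnd ℂ) Q := by
    rw [vP_eval, hQ, conj_qP_eval, Finset.mul_sum]
    refine Finset.sum_congr rfl fun j hj => ?_
    simp only [Finset.mem_range] at hj
    have hq : Q ^ j * Q ^ (d - 1 - j) = Q ^ (d-1) := by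
      rw [← pow_add]; congr 1; omega
    rw [← hQ, hcrit, mul_pow]
    linear_combination (((d - 1).choose j : ℂ) * (starRingEnd ℂ) (s j) * ((starRingEnd ℂ) z) ^ j) * hq
  rw [eval_sub, eval_mul, eval_X, hu, hv, hcrit]
  simp only [map_mul]
  rw [Complex.conj_conj]
  ring

lemma fval_zero (hd : 1 ≤ d) (s : ℕ → ℂ) (b : ℂ) : fval d s 0 b = s d * b ^ d := by
  rw [fval, Finset.sum_range_succ]
  have h1 : ∀ j ∈ range d, (d.choose j : ℂ) * s j * (0:ℂ) ^ (d - j) * b ^ j = 0 := by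
    intro j hj
    simp only [Finset.mem_range] at hj
    rw [zero_pow (by omega : d - j ≠ 0)]
    ring
  rw [Finset.sum_congr rfl h1]
  simp

lemma fval_scale (d : ℕ) (s : ℕ → ℂ) (a z : ℂ) :
    fval d s a (a * z) = a ^ d * (phiP d s).eval z := by
  rw [fval, phiP_eval, Finset.mul_sum]
  refine Finset.sum_congr rfl fun j hj => ?_
  simp only [Finset.mem_range] at hj
  rw [mul_pow]
  have : a ^ (d - j) * a ^ j = a ^ d := by rw [← pow_add]; congr 1; omega
  linear_combination ((d.choose j : ℂ) * s j * z ^ j) * this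

def Kset : Set (ℂ × ℂ) := {x | ‖x.1‖ ^ 2 + ‖x.2‖ ^ 2 = 1}

lemma continuous_absf (d : ℕ) (s : ℕ → ℂ) :
    Continuous (fun x : ℂ × ℂ => ‖fval d s x.1 x.2‖) := by
  apply continuous_norm.comp
  unfold fval
  exact continuous_finset_sum _ fun j _ => by fun_prop

lemma Kset_compact : IsCompact Kset := by
  have hcl : IsClosed Kset := by
    have : Continuous (fun x : ℂ × ℂ => ‖x.1‖ ^ 2 + ‖x.2‖ ^ 2) :=
      ((continuous_norm.comp continuous_fst).pow 2).add
        ((continuous_norm.comp continuous_snd).pow 2)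
    exact isClosed_eq this continuous_const
  have hbd : Bornology.IsBounded Kset := by
    apply Bornology.IsBounded.subset (Metric.isBounded_closedBall (x := (0 : ℂ × ℂ)) (r := 1))
    intro x hx
    simp only [Kset, Set.mem_setOf_eq] at hx
    have h1 : ‖x.1‖ ≤ 1 := by
      nlinarith [norm_nonneg x.1, norm_nonneg x.2, sq_nonneg (‖x.2‖)]
    have h2 : ‖x.2‖ ≤ 1 := by nlinarith [norm_nonneg x.1, norm_nonneg x.2]
    simp only [Metric.mem_closedBall, Prod.dist_eq, dist_zero_right]
    exact max_le h1 h2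
  exact Metric.isCompact_of_isClosed_isBounded hcl hbd

lemma Kset_nonempty : Kset.Nonempty := ⟨(0, 1), by simp [Kset]⟩

lemma specSet_eq (d : ℕ) (s : ℕ → ℂ) :
    {r : ℝ | ∃ x₁ x₂ : ℂ, ‖x₁‖ ^ 2 + ‖x₂‖ ^ 2 = 1 ∧
      r = ‖fval d s x₁ x₂‖}
    = (fun x : ℂ × ℂ => ‖fval d s x.1 x.2‖) '' Kset := by
  ext r
  constructor
  · rintro ⟨x₁, x₂, hx, rfl⟩
    exact ⟨(x₁, x₂), hx, rfl⟩
  · rintro ⟨x, hx, rfl⟩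
    exact ⟨x.1, x.2, hx, rfl⟩

lemma exists_max (d : ℕ) (s : ℕ → ℂ) :
    ∃ x₀ ∈ Kset, IsMaxOn (fun x : ℂ × ℂ => ‖fval d s x.1 x.2‖) Kset x₀ ∧
      specNorm2 d s = ‖fval d s x₀.1 x₀.2‖ := by
  obtain ⟨x₀, hx₀, hmax⟩ := Kset_compact.exists_isMaxOn Kset_nonempty
    (continuous_absf d s).continuousOn
  refine ⟨x₀, hx₀, hmax, ?_⟩
  rw [specNorm2, specSet_eq]
  apply IsGreatest.csSup_eq
  exact ⟨⟨x₀, hx₀, rfl⟩, by rintro r ⟨x, hx, rfl⟩; exact hmax hx⟩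

lemma rpow_half_eq (t : ℝ) (ht : 0 < t) (d : ℕ) :
    t ^ ((d:ℝ)/2) = Real.sqrt t ^ d := by
  rw [Real.sqrt_eq_rpow, ← Real.rpow_natCast (t ^ ((1:ℝ)/2)) d, ← Real.rpow_mul ht.le]
  congr 1
  ring

lemma scale_abs (d : ℕ) (s : ℕ → ℂ) (z a : ℂ)
    (ha : ‖a‖ ^ 2 * (1 + ‖z‖ ^ 2) = 1) :
    ‖fval d s a (a * z)‖ =
      ‖(phiP d s).eval z‖ / (1 + ‖z‖ ^ 2) ^ ((d:ℝ)/2) := by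
  set t := 1 + ‖z‖ ^ 2 with hts
  have ht : 0 < t := by positivity
  have h2 : ‖a‖ ^ 2 = t⁻¹ := by
    field_simp
    linarith [ha]
  have haa : ‖a‖ = (Real.sqrt t)⁻¹ := by
    rw [← Real.sqrt_sq (norm_nonneg a), h2, Real.sqrt_inv]
  rw [fval_scale, norm_mul, norm_pow, haa, rpow_half_eq t ht d, inv_pow, div_eq_mul_inv, mul_comm]

lemma unit_point (d : ℕ) (s : ℕ → ℂ) (z : ℂ) :
    ∃ x₁ x₂ : ℂ, ‖x₁‖ ^ 2 + ‖x₂‖ ^ 2 = 1 ∧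
      ‖fval d s x₁ x₂‖ =
        ‖(phiP d s).eval z‖ / (1 + ‖z‖ ^ 2) ^ ((d:ℝ)/2) := by
  set t := 1 + ‖z‖ ^ 2 with hts
  have ht : 0 < t := by positivity
  have hs : 0 < Real.sqrt t := Real.sqrt_pos.2 ht
  set A : ℂ := (((Real.sqrt t)⁻¹ : ℝ) : ℂ) with hA
  have hAabs : ‖A‖ ^ 2 = t⁻¹ := by
    have h1 : ‖A‖ = (Real.sqrt t)⁻¹ := by
      rw [hA, Complex.norm_real, Real.norm_eq_abs]
      exact abs_of_nonneg (by positivity)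
    rw [h1, inv_pow, Real.sq_sqrt ht.le]
  have hAt : ‖A‖ ^ 2 * t = 1 := by
    rw [hAabs]; field_simp
  refine ⟨A, A * z, ?_, scale_abs d s z A hAt⟩
  rw [norm_mul, mul_pow, hAabs]
  field_simp
  exact hts.symm

lemma deriv_eq_of_max (d : ℕ) (Φ : Polynomial ℂ) (z₀ : ℂ) (M : ℝ)
    (hM : M * (1 + Complex.normSq z₀) ^ d = Complex.normSq (Φ.eval z₀))
    (hmax : ∀ z : ℂ, Complex.normSq (Φ.eval z) ≤ M * (1 + Complex.normSq z) ^ d) :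
    (starRingEnd ℂ) (Φ.eval z₀) * (Polynomial.derivative Φ).eval z₀
      = ((M * d * (1 + Complex.normSq z₀) ^ (d - 1) : ℝ) : ℂ) * (starRingEnd ℂ) z₀ := by
  set φ₀ : ℂ := Φ.eval z₀ with hφ₀
  set D : ℂ := (Polynomial.derivative Φ).eval z₀ with hD
  have hφ : HasFDerivAt (fun z => Φ.eval z)
      ((ContinuousLinearMap.smulRight (1 : ℂ →L[ℂ] ℂ) D).restrictScalars ℝ) z₀ :=
    ((Φ.hasDerivAt z₀).hasFDerivAt).restrictScalars ℝ
  have hφs := hφ.star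
  have hmul := hφ.mul hφs
  have hid : HasFDerivAt (fun z : ℂ => z) (ContinuousLinearMap.id ℝ ℂ) z₀ := hasFDerivAt_id z₀
  have hids := hid.star
  have hN := hid.mul hids
  have hNre := (Complex.reCLM.hasFDerivAt.comp z₀ hN).const_add 1
  have hpow := (hasDerivAt_pow d (1 + (z₀ * star z₀).re)).comp_hasFDerivAt z₀ hNre
  have hG := (Complex.reCLM.hasFDerivAt.comp z₀ hmul).sub (hpow.const_mul M)
  have hfun : (fun z : ℂ => Complex.reCLM (Φ.eval z * star (Φ.eval z)) - M * (1 + Complex.reCLM (z * star z)) ^ d)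
      = fun z : ℂ => Complex.normSq (Φ.eval z) - M * (1 + Complex.normSq z) ^ d := by
    funext z
    simp [Complex.star_def, Complex.mul_conj]
  simp only [Function.comp_def] at hG
  simp only [Pi.sub_def, Pi.mul_apply] at hG
  rw [hfun] at hG
  have hloc : IsLocalMax (fun z : ℂ => Complex.normSq (Φ.eval z) - M * (1 + Complex.normSq z) ^ d) z₀ := by
    apply Filter.Eventually.of_forall
    intro z
    have h1 := hmax z
    simp only [← hφ₀] at hM ⊢
    rw [hM]
    simp only [sub_self]
    linarith
  have hL0 := hG.fderiv.symm.trans hloc.fderiv_eq_zero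
  have e1 := congrArg (fun L : ℂ →L[ℝ] ℝ => L 1) hL0
  have eI := congrArg (fun L : ℂ →L[ℝ] ℝ => L Complex.I) hL0
  simp only [ContinuousLinearMap.sub_apply, ContinuousLinearMap.add_apply,
    ContinuousLinearMap.coe_smul', Pi.smul_apply, ContinuousLinearMap.comp_apply,
    ContinuousLinearMap.coe_restrictScalars', ContinuousLinearMap.smulRight_apply,
    ContinuousLinearMap.one_apply, ContinuousLinearMap.id_apply,
    ContinuousLinearMap.zero_apply, Complex.reCLM_apply, smul_eq_mul,
    ContinuousLinearMap.smul_apply, ContinuousLinearEquiv.coe_coe, starL'_apply] at e1 eI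
  simp only [starL'_apply, Complex.star_def, one_mul, mul_one, map_mul, Complex.conj_I,
    Complex.add_re, Complex.mul_re, Complex.mul_im, Complex.conj_re, Complex.conj_im,
    Complex.I_re, Complex.I_im, Complex.normSq_apply, neg_mul, mul_neg, neg_neg,
    Complex.neg_re, Complex.neg_im, Complex.one_re, Complex.one_im] at e1 eI
  rw [Complex.ext_iff]
  constructor <;>
  · simp only [Complex.mul_re, Complex.mul_im, Complex.ofReal_re, Complex.ofReal_im,
      Complex.conj_re, Complex.conj_im, Complex.normSq_apply]
    ring_nf
    ring_nf at e1 eI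
    linarith

lemma sq_le_of_div_le (A B tA tB : ℝ) (hA : 0 ≤ A) (hB : 0 ≤ B)
    (htA : 0 < tA) (htB : 0 < tB) (d : ℕ)
    (h : A / tA ^ ((d:ℝ)/2) ≤ B / tB ^ ((d:ℝ)/2)) :
    A ^ 2 * tB ^ d ≤ B ^ 2 * tA ^ d := by
  have hpA : (0:ℝ) < tA ^ ((d:ℝ)/2) := Real.rpow_pos_of_pos htA _
  have hpB : (0:ℝ) < tB ^ ((d:ℝ)/2) := Real.rpow_pos_of_pos htB _
  rw [div_le_div_iff₀ hpA hpB] at h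
  have hsq : (A * tB ^ ((d:ℝ)/2)) ^ 2 ≤ (B * tA ^ ((d:ℝ)/2)) ^ 2 := by
    have h1 : 0 ≤ A * tB ^ ((d:ℝ)/2) := by positivity
    nlinarith [h]
  have e1 : (tA ^ ((d:ℝ)/2)) ^ 2 = tA ^ d := by
    rw [← Real.rpow_natCast (tA ^ ((d:ℝ)/2)) 2, ← Real.rpow_mul htA.le, ← Real.rpow_natCast tA d]
    congr 1
    push_cast
    ring
  have e2 : (tB ^ ((d:ℝ)/2)) ^ 2 = tB ^ d := by
    rw [← Real.rpow_natCast (tB ^ ((d:ℝ)/2)) 2, ← Real.rpow_mul htB.le, ← Real.rpow_natCast tB d]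
    congr 1
    push_cast
    ring
  calc A ^ 2 * tB ^ d = (A * tB ^ ((d:ℝ)/2)) ^ 2 := by rw [mul_pow, e2]
    _ ≤ (B * tA ^ ((d:ℝ)/2)) ^ 2 := hsq
    _ = B ^ 2 * tA ^ d := by rw [mul_pow, e1]

end Aux

set_option maxHeartbeats 1000000 in
/-- If `z v(z) - u(z)` is not the zero polynomial, then its root set `R₁` is finite and
`‖f‖_{σ,ℂ} = max { |s_d|, max_{z ∈ R₁} |φ(z)|/(1+|z|²)^{d/2} }`. -/
theorem stmt13 (d : ℕ) (hd : 3 ≤ d) (s : ℕ → ℂ)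
    (h : Polynomial.X * vP d s - uP d s ≠ 0) :
    {z : ℂ | (Polynomial.X * vP d s - uP d s).eval z = 0}.Finite ∧
    IsGreatest (({‖s d‖} : Set ℝ) ∪
        {r : ℝ | ∃ z : ℂ, (Polynomial.X * vP d s - uP d s).eval z = 0 ∧
          r = ‖(phiP d s).eval z‖ / (1 + ‖z‖ ^ 2) ^ ((d : ℝ) / 2)})
      (specNorm2 d s) := by
  have hd1 : 1 ≤ d := by omega
  refine ⟨Polynomial.finite_setOf_isRoot h, ?_⟩
  obtain ⟨x₀, hx₀K, hmax, hspec⟩ := exists_max d s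
  have hK : ‖x₀.1‖ ^ 2 + ‖x₀.2‖ ^ 2 = 1 := hx₀K
  have hsd_le : ‖s d‖ ≤ ‖fval d s x₀.1 x₀.2‖ := by
    have h01 : ((0:ℂ),(1:ℂ)) ∈ Kset := by simp [Kset]
    have hle := hmax h01
    simp only [Set.mem_setOf_eq] at hle
    rw [fval_zero hd1, norm_mul, norm_pow, norm_one, one_pow, mul_one] at hle
    exact hle
  have hphi_le : ∀ z : ℂ,
      ‖(phiP d s).eval z‖ / (1 + ‖z‖ ^ 2) ^ ((d:ℝ)/2)
        ≤ ‖fval d s x₀.1 x₀.2‖ := by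
    intro z
    obtain ⟨y₁, y₂, hy, hyval⟩ := unit_point d s z
    have hyK : ((y₁, y₂) : ℂ × ℂ) ∈ Kset := hy
    have hle := hmax hyK
    simp only [Set.mem_setOf_eq] at hle
    rw [hyval] at hle
    exact hle
  constructor
  · -- membership
    by_cases haz : x₀.1 = 0
    · left
      have hb2 : ‖x₀.2‖ ^ 2 = 1 := by rw [haz] at hK; simpa using hK
      have hb1 : ‖x₀.2‖ = 1 := by nlinarith [norm_nonneg x₀.2]
      have hvv : ‖fval d s x₀.1 x₀.2‖ = ‖s d‖ := by
        rw [haz, fval_zero hd1, norm_mul, norm_pow, hb1, one_pow, mul_one]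
      rw [hspec, hvv]
      rfl
    · obtain ⟨z₀, hz₀⟩ : ∃ w : ℂ, w = x₀.2 / x₀.1 := ⟨_, rfl⟩
      have hba : x₀.2 = x₀.1 * z₀ := by rw [hz₀]; field_simp
      have habs : ‖x₀.1‖ ^ 2 * (1 + ‖z₀‖ ^ 2) = 1 := by
        have h1 : ‖x₀.2‖ ^ 2 = ‖x₀.1‖ ^ 2 * ‖z₀‖ ^ 2 := by
          rw [hba, norm_mul, mul_pow]
        nlinarith [hK, h1]
      have hval : ‖fval d s x₀.1 x₀.2‖ =
          ‖(phiP d s).eval z₀‖ / (1 + ‖z₀‖ ^ 2) ^ ((d:ℝ)/2) := by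
        rw [hba]
        exact scale_abs d s z₀ x₀.1 habs
      by_cases h0 : ‖fval d s x₀.1 x₀.2‖ = 0
      · left
        rw [h0] at hsd_le
        have hsd0 : ‖s d‖ = 0 := le_antisymm hsd_le (norm_nonneg _)
        rw [hspec, h0, ← hsd0]
        rfl
      · right
        have hmaxz : ∀ z : ℂ,
            ‖(phiP d s).eval z‖ / (1 + ‖z‖ ^ 2) ^ ((d:ℝ)/2)
              ≤ ‖(phiP d s).eval z₀‖ / (1 + ‖z₀‖ ^ 2) ^ ((d:ℝ)/2) := by
          intro z
          rw [← hval]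
          exact hphi_le z
        have hφ0 : (phiP d s).eval z₀ ≠ 0 := by
          intro hc
          rw [hval, hc] at h0
          simp at h0
        have ht₀ : (0:ℝ) < 1 + Complex.normSq z₀ := by
          have := Complex.normSq_nonneg z₀
          linarith
        obtain ⟨M, hMdef⟩ : ∃ M : ℝ,
            M = Complex.normSq ((phiP d s).eval z₀) / (1 + Complex.normSq z₀) ^ d := ⟨_, rfl⟩
        have hM : M * (1 + Complex.normSq z₀) ^ d = Complex.normSq ((phiP d s).eval z₀) := by
          rw [hMdef]
          exact div_mul_cancel₀ _ (ne_of_gt (pow_pos ht₀ d))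
        have hmaxM : ∀ z : ℂ,
            Complex.normSq ((phiP d s).eval z) ≤ M * (1 + Complex.normSq z) ^ d := by
          intro z
          have hz := hmaxz z
          have hsq := sq_le_of_div_le _ _ _ _ (norm_nonneg _) (norm_nonneg _)
            (by positivity) (by positivity) d hz
          rw [Complex.sq_norm, Complex.sq_norm, Complex.sq_norm, Complex.sq_norm] at hsq
          rw [hMdef, div_mul_eq_mul_div, le_div_iff₀ (pow_pos ht₀ d)]
          exact hsq
        have key := deriv_eq_of_max d (phiP d s) z₀ M hM hmaxM
        have hDp : (Polynomial.derivative (phiP d s)).eval z₀ = (d:ℂ) * (pP d s).eval z₀ :=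
          phi_deriv hd1 s z₀
        have hdec : (phiP d s).eval z₀ = z₀ * (pP d s).eval z₀ + (qP d s).eval z₀ :=
          phi_decomp hd1 s z₀
        have hn : ((1 + Complex.normSq z₀ : ℝ) : ℂ) = 1 + z₀ * (starRingEnd ℂ) z₀ := by
          rw [Complex.ofReal_add, Complex.ofReal_one, Complex.mul_conj]
        have hpowsplit : (1 + Complex.normSq z₀) ^ (d-1) * (1 + Complex.normSq z₀)
            = (1 + Complex.normSq z₀) ^ d := by
          rw [← pow_succ]
          congr 1
          omega
        have hr : (M * (d:ℝ) * (1 + Complex.normSq z₀) ^ (d - 1)) * (1 + Complex.normSq z₀)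
            = (d:ℝ) * Complex.normSq ((phiP d s).eval z₀) := by
          linear_combination ((d:ℝ) * M) * hpowsplit + (d:ℝ) * hM
        have hns : ((Complex.normSq ((phiP d s).eval z₀) : ℝ) : ℂ)
            = (phiP d s).eval z₀ * (starRingEnd ℂ) ((phiP d s).eval z₀) :=
          (Complex.mul_conj _).symm
        have key2 : (starRingEnd ℂ) ((phiP d s).eval z₀) * ((d:ℂ) * (pP d s).eval z₀)
              * ((1 + Complex.normSq z₀ : ℝ):ℂ)
            = (d:ℂ) * ((phiP d s).eval z₀ * (starRingEnd ℂ) ((phiP d s).eval z₀))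
              * (starRingEnd ℂ) z₀ := by
          rw [← hDp, ← hns, key]
          have hrC : ((M * (d:ℝ) * (1 + Complex.normSq z₀) ^ (d - 1) : ℝ) : ℂ)
                * ((1 + Complex.normSq z₀ : ℝ) : ℂ)
              = (d:ℂ) * ((Complex.normSq ((phiP d s).eval z₀) : ℝ) : ℂ) := by
            exact_mod_cast congrArg (Complex.ofReal) hr
          linear_combination (starRingEnd ℂ) z₀ * hrC
        rw [hn] at key2
        have hdc : (d:ℂ) * (starRingEnd ℂ) ((phiP d s).eval z₀) ≠ 0 := by
          apply mul_ne_zero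
          · exact_mod_cast Nat.cast_ne_zero.2 (by omega)
          · simpa using hφ0
        have h1 : (d:ℂ) * (starRingEnd ℂ) ((phiP d s).eval z₀)
              * ((pP d s).eval z₀ * (1 + z₀ * (starRingEnd ℂ) z₀))
            = (d:ℂ) * (starRingEnd ℂ) ((phiP d s).eval z₀)
              * ((phiP d s).eval z₀ * (starRingEnd ℂ) z₀) := by
          linear_combination key2
        have h2 := mul_left_cancel₀ hdc h1
        rw [hdec] at h2
        have hcrit : (pP d s).eval z₀ = (starRingEnd ℂ) z₀ * (qP d s).eval z₀ := by
          linear_combination h2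
        refine ⟨z₀, root_of_crit hd1 s z₀ hcrit, ?_⟩
        rw [hspec, hval]
  · -- upper bound
    rintro r (hr | ⟨z, hz, rfl⟩)
    · have hr' : r = ‖s d‖ := hr
      rw [hr', hspec]
      exact hsd_le
    · rw [hspec]
      exact hphi_le z

end
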